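/- Let G = (V,E) be a 3-sparse graph containing a reducible vertex-pair {u,v} with exactly one common neighbour a, and suppose the graph G' obtained by contracting u and v into a single vertex (a 3-dimensional spider contraction) is not 3-sparse. Then there exists X ⊂ V with u,v ∈ X and |X| ≥ 6 such that either (a) i(X) = 3|X| - 6, or (b) i(X) = 3|X| - 7, or (c) a ∉ X and i(X) = 3|X| - 8. -/

import Mathlib

open Finset

variable {V : Type*} [Fintype V] [DecidableEq V]

/-- `i(X)`: the number of edges of `G` with both endpoints in `X`. -/
def edgesWithin (G : SimpleGraph V) [DecidableRel G.Adj] (X : Finset V) : ℕ :=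
  ((X ×ˢ X).filter fun p => G.Adj p.1 p.2).card / 2

/-- `d(X,Y)`: the number of edges of `G` with one endpoint in `X \ Y` and the other in `Y \ X`. -/
def edgesBetween (G : SimpleGraph V) [DecidableRel G.Adj] (X Y : Finset V) : ℕ :=
  (((X \ Y) ×ˢ (Y \ X)).filter fun p => G.Adj p.1 p.2).card

/-- `G` is 3-sparse: `i(X) ≤ 3|X| - 6` for all `X` with `|X| ≥ 3`. -/
def Sparse3 (G : SimpleGraph V) [DecidableRel G.Adj] : Prop :=
  ∀ X : Finset V, 3 ≤ X.card → edgesWithin G X + 6 ≤ 3 * X.card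

/-- The set of common neighbours of `u` and `v`. -/
def commonNbrs (G : SimpleGraph V) [DecidableRel G.Adj] (u v : V) : Finset V :=
  Finset.univ.filter fun t => G.Adj u t ∧ G.Adj v t

/-- The graph obtained from G by identifying the two vertices u and v into u
(the vertex v is removed); this is the result of contracting the pair {u,v}
(or the edge uv, if present) and simplifying. -/
def contractPair (G : SimpleGraph V) (u v : V) : SimpleGraph {x : V // x ≠ v} where
  Adj a b := a ≠ b ∧
    (G.Adj a.1 b.1 ∨ (a.1 = u ∧ G.Adj v b.1) ∨ (b.1 = u ∧ G.Adj a.1 v))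
  symm := ⟨by
    rintro a b ⟨hab, h⟩
    refine ⟨hab.symm, ?_⟩
    rcases h with h | ⟨h1, h2⟩ | ⟨h1, h2⟩
    · exact Or.inl h.symm
    · exact Or.inr (Or.inr ⟨h1, h2.symm⟩)
    · exact Or.inr (Or.inl ⟨h1, h2.symm⟩)⟩
  loopless := ⟨fun a h => h.1 rfl⟩

instance (G : SimpleGraph V) [DecidableRel G.Adj] (u v : V) :
    DecidableRel (contractPair G u v).Adj := fun a b =>
  inferInstanceAs (Decidable (a ≠ b ∧
    (G.Adj a.1 b.1 ∨ (a.1 = u ∧ G.Adj v b.1) ∨ (b.1 = u ∧ G.Adj a.1 v))))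

namespace Stmt16Aux

variable {W : Type*} [DecidableEq W]

/-- Twice the number of edges within `X`: the number of ordered adjacent pairs in `X`. -/
def ec (G : SimpleGraph W) [DecidableRel G.Adj] (X : Finset W) : ℕ :=
  ((X ×ˢ X).filter fun p => G.Adj p.1 p.2).card

omit [DecidableEq W] in
lemma edgesWithin_eq_ec (G : SimpleGraph W) [DecidableRel G.Adj] (X : Finset W) :
    edgesWithin G X = ec G X / 2 := rfl

lemma ec_erase (G : SimpleGraph W) [DecidableRel G.Adj] {X : Finset W} {w : W} (hw : w ∈ X) :
    ec G X = ec G (X.erase w) + 2 * (X.filter (G.Adj w)).card := by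
  classical
  set S := (X ×ˢ X).filter fun p => G.Adj p.1 p.2 with hS
  have e1 : (S.filter fun p => p.1 = w).card + (S.filter fun p => ¬ p.1 = w).card = S.card :=
    card_filter_add_card_filter_not _
  have e2 : ((S.filter fun p => ¬ p.1 = w).filter fun p => p.2 = w).card
      + ((S.filter fun p => ¬ p.1 = w).filter fun p => ¬ p.2 = w).card
      = (S.filter fun p => ¬ p.1 = w).card :=
    card_filter_add_card_filter_not _
  have hA : (S.filter fun p => p.1 = w) = (X.filter (G.Adj w)).image (fun y => (w, y)) := by
    ext ⟨x, y⟩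
    simp only [hS, mem_filter, mem_product, Finset.mem_image, Prod.mk.injEq]
    constructor
    · rintro ⟨⟨⟨hx, hy⟩, hadj⟩, rfl⟩
      exact ⟨y, ⟨hy, hadj⟩, rfl, rfl⟩
    · rintro ⟨z, ⟨hz, hadj⟩, rfl, rfl⟩
      exact ⟨⟨⟨hw, hz⟩, hadj⟩, rfl⟩
  have hB : ((S.filter fun p => ¬ p.1 = w).filter fun p => p.2 = w)
      = (X.filter (G.Adj w)).image (fun y => (y, w)) := by
    ext ⟨x, y⟩
    simp only [hS, mem_filter, mem_product, Finset.mem_image, Prod.mk.injEq]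
    constructor
    · rintro ⟨⟨⟨⟨hx, hy⟩, hadj⟩, hne⟩, rfl⟩
      exact ⟨x, ⟨hx, hadj.symm⟩, rfl, rfl⟩
    · rintro ⟨z, ⟨hz, hadj⟩, rfl, rfl⟩
      exact ⟨⟨⟨⟨hz, hw⟩, hadj.symm⟩, G.ne_of_adj hadj.symm⟩, rfl⟩
  have hC : ((S.filter fun p => ¬ p.1 = w).filter fun p => ¬ p.2 = w)
      = ((X.erase w) ×ˢ (X.erase w)).filter fun p => G.Adj p.1 p.2 := by
    ext ⟨x, y⟩
    simp only [hS, mem_filter, mem_product, mem_erase]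
    tauto
  have hinj1 : Function.Injective (fun y : W => (w, y)) := by
    intro a b h; simpa using h
  have hinj2 : Function.Injective (fun y : W => (y, w)) := by
    intro a b h; simpa using h
  have cA := hA ▸ Finset.card_image_of_injective (X.filter (G.Adj w)) hinj1
  have cB := hB ▸ Finset.card_image_of_injective (X.filter (G.Adj w)) hinj2
  have hec : ec G X = S.card := rfl
  rw [hec, ← e1, ← e2, cA, cB]
  have hec2 : ec G (X.erase w)
      = (((X.erase w) ×ˢ (X.erase w)).filter fun p => G.Adj p.1 p.2).card := rfl
  rw [hec2, ← hC]
  ring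

lemma ec_even (G : SimpleGraph W) [DecidableRel G.Adj] (X : Finset W) : Even (ec G X) := by
  classical
  induction X using Finset.induction_on with
  | empty => simp [ec]
  | insert b s h ih =>
      rw [ec_erase G (mem_insert_self b s), Finset.erase_insert h]
      exact ih.add (even_two_mul _)

lemma ec_le (G : SimpleGraph W) [DecidableRel G.Adj] (X : Finset W) :
    ec G X + X.card ≤ X.card * X.card := by
  classical
  have hsub : ((X ×ˢ X).filter fun p => G.Adj p.1 p.2) ⊆ (X ×ˢ X).filter fun p => ¬ p.1 = p.2 := by
    intro p hp
    simp only [mem_filter] at hp ⊢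
    exact ⟨hp.1, G.ne_of_adj hp.2⟩
  have e1 : ((X ×ˢ X).filter fun p => p.1 = p.2).card
      + ((X ×ˢ X).filter fun p => ¬ p.1 = p.2).card = (X ×ˢ X).card :=
    card_filter_add_card_filter_not _
  have hdiag : ((X ×ˢ X).filter fun p => p.1 = p.2) = X.image (fun x => (x, x)) := by
    ext ⟨x, y⟩
    simp only [mem_filter, mem_product, Finset.mem_image, Prod.mk.injEq]
    constructor
    · rintro ⟨⟨hx, hy⟩, rfl⟩; exact ⟨x, hx, rfl, rfl⟩
    · rintro ⟨z, hz, rfl, rfl⟩; exact ⟨⟨hz, hz⟩, rfl⟩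
  have hdi : Function.Injective (fun x : W => (x, x)) := by
    intro a b h; exact congrArg Prod.fst h
  have cdiag : ((X ×ˢ X).filter fun p => p.1 = p.2).card = X.card := by
    rw [hdiag, Finset.card_image_of_injective _ hdi]
  have hcard := Finset.card_le_card hsub
  rw [Finset.card_product] at e1
  have hec : ec G X = ((X ×ˢ X).filter fun p => G.Adj p.1 p.2).card := rfl
  omega

variable {V : Type*} [DecidableEq V]

lemma contractPair_adj {G : SimpleGraph V} {u v : V} {a b : {x : V // x ≠ v}} :
    (contractPair G u v).Adj a b ↔ (a ≠ b ∧
      (G.Adj a.1 b.1 ∨ (a.1 = u ∧ G.Adj v b.1) ∨ (b.1 = u ∧ G.Adj a.1 v))) := Iff.rfl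

lemma ec_restrict (G : SimpleGraph V) [DecidableRel G.Adj] (u v : V)
    (Y : Finset {x : V // x ≠ v}) (hu : ∀ b ∈ Y, b.1 ≠ u) :
    ec (contractPair G u v) Y = ec G (Y.image Subtype.val) := by
  classical
  refine Finset.card_bij (fun p _ => (p.1.1, p.2.1)) ?_ ?_ ?_
  · rintro ⟨b, c⟩ hp
    simp only [mem_filter, mem_product, contractPair_adj] at hp
    obtain ⟨⟨hb, hc⟩, hne, hadj⟩ := hp
    rcases hadj with h | ⟨h1, h2⟩ | ⟨h1, h2⟩
    · exact mem_filter.2 ⟨mem_product.2 ⟨mem_image_of_mem _ hb, mem_image_of_mem _ hc⟩, h⟩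
    · exact absurd h1 (hu b hb)
    · exact absurd h1 (hu c hc)
  · rintro ⟨b, c⟩ h1 ⟨b', c'⟩ h2 heq
    simp only [Prod.mk.injEq] at heq
    simp only [Prod.mk.injEq]
    exact ⟨Subtype.ext heq.1, Subtype.ext heq.2⟩
  · rintro ⟨x, y⟩ hxy
    simp only [mem_filter, mem_product, Finset.mem_image] at hxy
    obtain ⟨⟨⟨b, hb, rfl⟩, ⟨c, hc, rfl⟩⟩, hadj⟩ := hxy
    refine ⟨(b, c), mem_filter.2 ⟨mem_product.2 ⟨hb, hc⟩, contractPair_adj.2 ⟨?_, Or.inl hadj⟩⟩, rfl⟩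
    intro h
    exact G.ne_of_adj hadj (congrArg Subtype.val h)

lemma du'_card (G : SimpleGraph V) [DecidableRel G.Adj] {u v : V} (huv : u ≠ v)
    (hnadj : ¬ G.Adj u v) (Y : Finset {x : V // x ≠ v}) :
    (Y.filter ((contractPair G u v).Adj ⟨u, huv⟩)).card
      = ((Y.image Subtype.val).filter fun x => G.Adj u x ∨ G.Adj v x).card := by
  classical
  refine Finset.card_bij (fun b _ => b.1) ?_ ?_ ?_
  · rintro b hb
    simp only [mem_filter, contractPair_adj] at hb
    obtain ⟨hbY, hne, hadj⟩ := hb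
    refine mem_filter.2 ⟨mem_image_of_mem _ hbY, ?_⟩
    rcases hadj with h | ⟨_, h⟩ | ⟨h1, h2⟩
    · exact Or.inl h
    · exact Or.inr h
    · exact absurd h2 hnadj
  · intro b _ b' _ h
    exact Subtype.ext h
  · rintro x hx
    simp only [mem_filter, Finset.mem_image] at hx
    obtain ⟨⟨b, hb, rfl⟩, hadj⟩ := hx
    refine ⟨b, mem_filter.2 ⟨hb, contractPair_adj.2 ⟨?_, ?_⟩⟩, rfl⟩
    · intro h
      have hval : u = b.1 := congrArg Subtype.val h
      rcases hadj with h1 | h1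
      · exact G.irrefl (hval ▸ h1)
      · exact hnadj ((hval ▸ h1).symm)
    · rcases hadj with h1 | h1
      · exact Or.inl h1
      · exact Or.inr (Or.inl ⟨rfl, h1⟩)

end Stmt16Aux

theorem stmt16 (G : SimpleGraph V) [DecidableRel G.Adj] (hsp : Sparse3 G)
    (u v a : V) (huv : u ≠ v) (hnadj : ¬ G.Adj u v)
    (hcn : commonNbrs G u v = {a})
    (hnot : ¬ Sparse3 (contractPair G u v)) :
    ∃ X : Finset V, u ∈ X ∧ v ∈ X ∧ 6 ≤ X.card ∧
      (edgesWithin G X + 6 = 3 * X.card ∨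
       edgesWithin G X + 7 = 3 * X.card ∨
       (a ∉ X ∧ edgesWithin G X + 8 = 3 * X.card)) := by
  classical
  simp only [Sparse3, not_forall, not_le] at hnot
  obtain ⟨Y, hY3, hYlt⟩ := hnot
  have hcomm : ∀ x, (G.Adj u x ∧ G.Adj v x) ↔ x = a := by
    intro x
    rw [← Finset.mem_singleton, ← hcn]
    simp [commonNbrs]
  have hua : G.Adj u a ∧ G.Adj v a := (hcomm a).2 rfl
  set u' : {x : V // x ≠ v} := (⟨u, huv⟩ : {x : V // x ≠ v}) with hu'
  obtain ⟨iY, hiY⟩ := Stmt16Aux.ec_even (contractPair G u v) Y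
  have heWY : edgesWithin (contractPair G u v) Y = iY := by
    rw [Stmt16Aux.edgesWithin_eq_ec]; omega
  rw [heWY] at hYlt
  by_cases hmem : u' ∈ Y
  · -- main case: the violating set contains the contracted vertex
    set B := Y.image Subtype.val with hB
    have huB : u ∈ B := mem_image_of_mem _ hmem
    have hvB : v ∉ B := by
      simp only [hB, Finset.mem_image]
      rintro ⟨b, hb, hbv⟩
      exact b.2 hbv
    set X := insert v B with hX
    have hcB : B.card = Y.card := card_image_of_injective _ Subtype.val_injective
    have hcX : X.card = Y.card + 1 := by
      rw [hX, card_insert_of_notMem hvB, hcB]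
    have h1 : Stmt16Aux.ec G X = Stmt16Aux.ec G B + 2 * (B.filter (G.Adj v)).card := by
      rw [Stmt16Aux.ec_erase G (mem_insert_self v B), Finset.erase_insert hvB,
        filter_insert, if_neg (G.irrefl : ¬ G.Adj v v)]
    have h2 : Stmt16Aux.ec G B = Stmt16Aux.ec G (B.erase u) + 2 * (B.filter (G.Adj u)).card :=
      Stmt16Aux.ec_erase G huB
    have h3 : Stmt16Aux.ec (contractPair G u v) Y = Stmt16Aux.ec (contractPair G u v) (Y.erase u') + 2 * (Y.filter ((contractPair G u v).Adj u')).card :=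
      Stmt16Aux.ec_erase (contractPair G u v) hmem
    have h4 : Stmt16Aux.ec (contractPair G u v) (Y.erase u') = Stmt16Aux.ec G (B.erase u) := by
      have hres := Stmt16Aux.ec_restrict G u v (Y.erase u')
        (fun b hb h => (Finset.mem_erase.1 hb).1 (Subtype.ext h))
      rw [hres, Finset.image_erase Subtype.val_injective]
    have h5 : (Y.filter ((contractPair G u v).Adj u')).card = (B.filter fun x => G.Adj u x ∨ G.Adj v x).card :=
      Stmt16Aux.du'_card G huv hnadj Y
    have h6 : (B.filter (G.Adj u)).card + (B.filter (G.Adj v)).card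
        = (B.filter fun x => G.Adj u x ∨ G.Adj v x).card
          + (B.filter fun x => G.Adj u x ∧ G.Adj v x).card := by
      rw [filter_or, filter_and]
      exact (card_union_add_card_inter _ _).symm
    have h7 : (B.filter fun x => G.Adj u x ∧ G.Adj v x) = B ∩ {a} := by
      ext x
      simp only [mem_filter, mem_inter, mem_singleton, hcomm x]
    set c := (B ∩ {a}).card with hc
    have h7c : (B.filter fun x => G.Adj u x ∧ G.Adj v x).card = c := by rw [h7]
    have hc1 : c ≤ 1 := le_trans (card_le_card inter_subset_right) (by simp)
    have h8 : (B.filter fun x => G.Adj u x ∨ G.Adj v x) ⊆ B.erase u := by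
      intro x hx
      simp only [mem_filter] at hx
      refine mem_erase.2 ⟨?_, hx.1⟩
      rintro rfl
      rcases hx.2 with h | h
      · exact G.irrefl h
      · exact hnadj h.symm
    obtain ⟨iX, hiX⟩ := Stmt16Aux.ec_even G X
    have heWX : edgesWithin G X = iX := by
      rw [Stmt16Aux.edgesWithin_eq_ec]; omega
    have hX2 : iX + iX = Stmt16Aux.ec G (B.erase u)
        + 2 * (B.filter (G.Adj u)).card + 2 * (B.filter (G.Adj v)).card := by
      rw [← hiX, h1, h2]
    have hY2 : iY + iY = Stmt16Aux.ec G (B.erase u)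
        + 2 * (B.filter fun x => G.Adj u x ∨ G.Adj v x).card := by
      rw [← hiY, h3, h4, h5]
    have hm : (B.erase u).card + 1 = Y.card := by
      rw [card_erase_of_mem huB, hcB]; omega
    have hb2 : (B.filter fun x => G.Adj u x ∨ G.Adj v x).card ≤ (B.erase u).card :=
      card_le_card h8
    have h6n : 6 ≤ X.card := by
      by_contra hlt
      push_neg at hlt
      have hb1 := Stmt16Aux.ec_le G (B.erase u)
      have hcase : (B.erase u).card = 2 ∨ (B.erase u).card = 3 := by omega
      rcases hcase with h | h
      · rw [h] at hb1
        omega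
      · rw [h] at hb1
        omega
    have hspX := hsp X (by omega)
    rw [heWX] at hspX
    have hkey : iX = iY + c := by omega
    have hav : a ≠ v := fun h => G.ne_of_adj hua.2 h.symm
    refine ⟨X, mem_insert_of_mem huB, mem_insert_self v B, h6n, ?_⟩
    rw [heWX]
    have hfin : iX + 6 = 3 * X.card ∨ iX + 7 = 3 * X.card
        ∨ (c = 0 ∧ iX + 8 = 3 * X.card) := by omega
    rcases hfin with h | h | ⟨hc0, h⟩
    · exact Or.inl h
    · exact Or.inr (Or.inl h)
    · refine Or.inr (Or.inr ⟨?_, h⟩)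
      intro haX
      rcases mem_insert.1 haX with h' | h'
      · exact hav h'
      · have hmemi : a ∈ B ∩ {a} := mem_inter.2 ⟨h', mem_singleton_self a⟩
        have := card_eq_zero.1 hc0
        rw [this] at hmemi
        exact absurd hmemi (notMem_empty a)
  · -- the violating set avoids the contracted vertex: contradiction with sparsity of G
    exfalso
    have hures : ∀ b ∈ Y, b.1 ≠ u := by
      intro b hb h
      have hb' : b = u' := Subtype.ext h
      exact hmem (hb' ▸ hb)
    have hres := Stmt16Aux.ec_restrict G u v Y hures
    have hcards : (Y.image Subtype.val).card = Y.card :=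
      card_image_of_injective _ Subtype.val_injective
    have hsp' := hsp (Y.image Subtype.val) (by omega)
    have heq : edgesWithin G (Y.image Subtype.val) = iY := by
      rw [Stmt16Aux.edgesWithin_eq_ec, ← hres]
      omega
    omega
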